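/- Let a ∈ ℝ and w_n = ln(n!) − (n+1/2)·ln n + n − ln√(2π) − ψ'(n+a)/12 for n ≥ 1. Then lim_{n→∞} n^3·(w_{n+1} − w_n) = 1/12 − a/6. -/

import Mathlib

open Real Filter Topology

noncomputable def trigamma (x : ℝ) : ℝ :=
  iteratedDeriv 2 (fun y => Real.log (Real.Gamma y)) x

lemma gammaCD {x : ℝ} (hx : 0 < x) : ContDiffAt ℝ (⊤ : ℕ∞) Real.Gamma x := by
  have hdiff : DifferentiableOn ℂ Complex.Gamma {s : ℂ | 0 < s.re} := by
    intro s hs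
    refine (Complex.differentiableAt_Gamma s fun m => ?_).differentiableWithinAt
    intro h
    rw [h] at hs
    simp only [Set.mem_setOf_eq, Complex.neg_re, Complex.natCast_re] at hs
    have : (0:ℝ) ≤ m := Nat.cast_nonneg m
    linarith
  have hopen : IsOpen {s : ℂ | 0 < s.re} := isOpen_lt continuous_const Complex.continuous_re
  have han : AnalyticAt ℂ Complex.Gamma (x : ℂ) :=
    hdiff.analyticOnNhd hopen _ (by simpa using hx)
  have hC : ContDiffAt ℂ (⊤ : ℕ∞) Complex.Gamma (x : ℂ) := han.contDiffAt
  have h1 : ContDiffAt ℝ (⊤ : ℕ∞) (fun y : ℝ => (Complex.Gamma (y : ℂ)).re) x := by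
    exact Complex.reCLM.contDiff.contDiffAt.comp x
      ((hC.restrict_scalars ℝ).comp x Complex.ofRealCLM.contDiff.contDiffAt)
  have : (fun y : ℝ => (Complex.Gamma (y : ℂ)).re) = Real.Gamma := by
    funext y; rw [Complex.Gamma_ofReal, Complex.ofReal_re]
  rwa [this] at h1

lemma logGammaCD : ContDiffOn ℝ (⊤ : ℕ∞) (fun y => Real.log (Real.Gamma y)) (Set.Ioi 0) := by
  intro x hx
  have hx' : (0:ℝ) < x := hx
  exact ((Real.contDiffAt_log.mpr (Real.Gamma_pos_of_pos hx').ne').comp x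
    (gammaCD hx')).contDiffWithinAt

lemma deriv_logGamma_rec {x : ℝ} (hx : 0 < x) :
    deriv (fun y => Real.log (Real.Gamma y)) (x + 1)
      = x⁻¹ + deriv (fun y => Real.log (Real.Gamma y)) x := by
  set g := fun y => Real.log (Real.Gamma y) with hg
  have h1 : deriv (fun y => g (y + 1)) x = deriv g (x + 1) := deriv_comp_add_const g 1 x
  rw [← h1]
  have heq : (fun y => g (y + 1)) =ᶠ[𝓝 x] fun y => Real.log y + g y := by
    filter_upwards [Ioi_mem_nhds hx] with y hy
    have hy' : (0:ℝ) < y := hy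
    simp only [hg]
    rw [Real.Gamma_add_one hy'.ne', Real.log_mul hy'.ne' (Real.Gamma_pos_of_pos hy').ne']
  rw [heq.deriv_eq]
  rw [deriv_fun_add (Real.differentiableAt_log hx.ne')
    ((logGammaCD.contDiffAt (Ioi_mem_nhds hx)).differentiableAt (by simp))]
  rw [Real.deriv_log]

lemma trigamma_rec {x : ℝ} (hx : 0 < x) :
    trigamma (x + 1) = trigamma x - 1 / x ^ 2 := by
  set g := fun y => Real.log (Real.Gamma y) with hgdef
  have hdg : ContDiffOn ℝ (⊤ : ℕ∞) (deriv g) (Set.Ioi 0) :=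
    logGammaCD.deriv_of_isOpen isOpen_Ioi (by simp)
  have ht : ∀ y : ℝ, trigamma y = deriv (deriv g) y := by
    intro y
    simp only [trigamma, iteratedDeriv_succ, iteratedDeriv_zero]
    rfl
  rw [ht, ht]
  have h1 : deriv (fun y => deriv g (y + 1)) x = deriv (deriv g) (x + 1) :=
    deriv_comp_add_const (deriv g) 1 x
  rw [← h1]
  have heq : (fun y => deriv g (y + 1)) =ᶠ[𝓝 x] fun y => y⁻¹ + deriv g y := by
    filter_upwards [Ioi_mem_nhds hx] with y hy
    exact deriv_logGamma_rec hy
  rw [heq.deriv_eq]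
  rw [deriv_fun_add (differentiableAt_inv hx.ne')
    ((hdg.contDiffAt (Ioi_mem_nhds hx)).differentiableAt (by simp))]
  rw [deriv_inv]
  ring

noncomputable def w (a : ℝ) (n : ℕ) : ℝ :=
  Real.log (n.factorial) - ((n : ℝ) + 1/2) * Real.log n + n
    - Real.log (Real.sqrt (2 * Real.pi)) - trigamma ((n : ℝ) + a) / 12

noncomputable def Pe (u : ℝ) : ℝ := u - u^2/2 + u^3/3 - u^4/4

lemma w_diff (a : ℝ) {n : ℕ} (hn : 1 ≤ n) (hna : 0 < (n:ℝ) + a) :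
    w a (n+1) - w a n
      = 1 - ((n:ℝ) + 1/2) * Real.log (1 + 1/(n:ℝ)) + 1/(12*((n:ℝ)+a)^2) := by
  have hn0 : (0:ℝ) < n := by exact_mod_cast hn
  have hf : (0:ℝ) < (n.factorial : ℝ) := by exact_mod_cast n.factorial_pos
  have h1 : Real.log (((n+1).factorial : ℕ) : ℝ)
      = Real.log ((n:ℝ)+1) + Real.log ((n.factorial : ℕ) : ℝ) := by
    rw [Nat.factorial_succ]
    push_cast
    rw [Real.log_mul (by positivity) hf.ne']
  have h2 : trigamma ((n:ℝ) + 1 + a) = trigamma ((n:ℝ)+a) - 1/((n:ℝ)+a)^2 := by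
    rw [show (n:ℝ)+1+a = ((n:ℝ)+a)+1 by ring, trigamma_rec hna]
  have h3 : Real.log (1 + 1/(n:ℝ)) = Real.log ((n:ℝ)+1) - Real.log n := by
    rw [show (1:ℝ) + 1/n = ((n:ℝ)+1)/n by field_simp,
      Real.log_div (by positivity) hn0.ne']
  simp only [w]
  push_cast
  rw [h1, h2, h3]
  have hA : ((n:ℝ)+a) ≠ 0 := hna.ne'
  field_simp
  ring

lemma hM (a : ℝ) (ha : ∀ n : ℕ, 1 ≤ n → 0 < (n : ℝ) + a) :
    Tendsto (fun n : ℕ => (n:ℝ)^3*(1 - ((n:ℝ)+1/2)*Pe (1/n) + 1/(12*((n:ℝ)+a)^2)))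
      atTop (nhds (1/12 - a/6)) := by
  have h0 : Tendsto (fun n : ℕ => (1:ℝ)/n) atTop (nhds 0) :=
    tendsto_one_div_atTop_nhds_zero_nat
  have hEq : ∀ᶠ n : ℕ in atTop,
      (n:ℝ)^3*(1 - ((n:ℝ)+1/2)*Pe (1/n) + 1/(12*((n:ℝ)+a)^2))
        = 1/12 + (1/(n:ℝ))/8 - (2*a + a^2*(1/n))/(12*(1+a*(1/n))^2) := by
    filter_upwards [eventually_ge_atTop 1] with n hn
    have hn0 : (0:ℝ) < n := by exact_mod_cast hn
    have hna : (0:ℝ) < (n:ℝ) + a := ha n hn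
    rw [show 1 + a*(1/(n:ℝ)) = ((n:ℝ)+a)/n by field_simp, Pe]
    field_simp
    ring
  rw [tendsto_congr' hEq]
  have hlim : Tendsto (fun n : ℕ => 1/12 + (1/(n:ℝ))/8 - (2*a + a^2*(1/n))/(12*(1+a*(1/n))^2))
      atTop (nhds (1/12 + 0/8 - (2*a + a^2*0)/(12*(1+a*0)^2))) := by
    refine Tendsto.sub (Tendsto.add tendsto_const_nhds (h0.div_const 8)) (Tendsto.div
      (tendsto_const_nhds.add (tendsto_const_nhds.mul h0))
      (tendsto_const_nhds.mul (((tendsto_const_nhds.add (tendsto_const_nhds.mul h0)).pow 2)))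
      (by norm_num))
  convert hlim using 2
  norm_num
  ring

lemma hE : Tendsto (fun n : ℕ => (n:ℝ)^3*((n:ℝ)+1/2)*(Real.log (1+1/(n:ℝ)) - Pe (1/n)))
    atTop (nhds 0) := by
  have h0 : Tendsto (fun n : ℕ => (1:ℝ)/n) atTop (nhds 0) :=
    tendsto_one_div_atTop_nhds_zero_nat
  apply squeeze_zero_norm' (a := fun n : ℕ => (n:ℝ)^3*((n:ℝ)+1/2)*((1/n)^5/(1-1/n)))
  · filter_upwards [eventually_ge_atTop 2] with n hn
    have hn0 : (2:ℝ) ≤ n := by exact_mod_cast hn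
    have hnp : (0:ℝ) < n := by linarith
    have hu1 : (1:ℝ)/n ≤ 1/2 := by
      rw [div_le_div_iff₀ hnp (by norm_num)]; linarith
    have hu0 : (0:ℝ) < 1/n := by positivity
    have habs : |(-(1/(n:ℝ)))| < 1 := by
      rw [abs_neg, abs_of_pos hu0]; linarith
    have hb := Real.abs_log_sub_add_sum_range_le habs 4
    simp only [Finset.sum_range_succ, Finset.sum_range_zero] at hb
    have hb' : |Real.log (1+1/(n:ℝ)) - Pe (1/n)| ≤ (1/(n:ℝ))^5/(1-1/n) := by
      have e2 : Real.log (1+1/(n:ℝ)) - Pe (1/n)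
          = 0 + (-(1/(n:ℝ))) ^ (0+1) / (((0:ℕ):ℝ)+1) + (-(1/(n:ℝ))) ^ (1+1) / (((1:ℕ):ℝ)+1)
            + (-(1/(n:ℝ))) ^ (2+1) / (((2:ℕ):ℝ)+1) + (-(1/(n:ℝ))) ^ (3+1) / (((3:ℕ):ℝ)+1)
            + Real.log (1 - -(1/(n:ℝ))) := by
        have e1 : (1:ℝ) - -(1/n) = 1 + 1/n := by ring
        rw [e1, Pe]
        push_cast
        ring
      rw [e2]
      refine hb.trans (le_of_eq ?_)
      rw [abs_neg, abs_of_pos hu0]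
    rw [norm_eq_abs, abs_mul, abs_of_nonneg (by positivity : (0:ℝ) ≤ (n:ℝ)^3*((n:ℝ)+1/2))]
    exact mul_le_mul_of_nonneg_left hb' (by positivity)
  · have hEq : ∀ᶠ n : ℕ in atTop,
        (n:ℝ)^3*((n:ℝ)+1/2)*((1/n)^5/(1-1/n))
          = (1/(n:ℝ) + (1/n)^2/2)/(1 - 1/n) := by
      filter_upwards [eventually_ge_atTop 2] with n hn
      have hn2 : (2:ℝ) ≤ n := by exact_mod_cast hn
      have hn0 : (0:ℝ) < n := by linarith
      have hne : (n:ℝ) - 1 ≠ 0 := by intro h; nlinarith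
      rw [show (1:ℝ) - 1/n = ((n:ℝ)-1)/n by field_simp]
      field_simp
    rw [tendsto_congr' hEq]
    have hlim : Tendsto (fun n : ℕ => (1/(n:ℝ) + (1/n)^2/2)/(1 - 1/n))
        atTop (nhds ((0 + 0^2/2)/(1 - 0))) :=
      Tendsto.div (h0.add ((h0.pow 2).div_const 2)) (tendsto_const_nhds.sub h0) (by norm_num)
    convert hlim using 1
    norm_num

theorem stmt11 (a : ℝ) (ha : ∀ n : ℕ, 1 ≤ n → 0 < (n : ℝ) + a) :
    Filter.Tendsto (fun n : ℕ => (n : ℝ) ^ 3 * (w a (n + 1) - w a n))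
      Filter.atTop (nhds (1/12 - a/6)) := by
  have hEq : ∀ᶠ n : ℕ in atTop,
      (n:ℝ)^3 * (w a (n+1) - w a n)
        = (n:ℝ)^3*(1 - ((n:ℝ)+1/2)*Pe (1/n) + 1/(12*((n:ℝ)+a)^2))
          - (n:ℝ)^3*((n:ℝ)+1/2)*(Real.log (1+1/(n:ℝ)) - Pe (1/n)) := by
    filter_upwards [eventually_ge_atTop 1] with n hn
    rw [w_diff a hn (ha n hn)]
    ring
  rw [tendsto_congr' hEq]
  simpa using (hM a ha).sub hE
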